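/- With μ as defined, if t is an ω-term, (t̄, t′) is a decomposition of t, and μ(t′) = μ(t), then one of the following holds: (1) t is 1 or a letter; (2) t = s_1·s_2 and (t̄,t′) = (s̄, s′·s_2) for some decomposition (s̄,s′) of s_1; (3) t = s^ω and (t̄,t′) = (s^k·s̄, s′·s^ω) for some decomposition (s̄,s′) of s and k ∈ ℕ ∪ {ω}; (4) t = s_1·s^ω and (t̄,t′) = (s_1·(s^k·s̄), s′·s^ω) for some decomposition (s̄,s′) of s and k ∈ ℕ ∪ {ω}. -/

import Mathlib

/-- ω-terms over the alphabet `A`: built from `1` and letters using binary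
multiplication and the unary ω-power. -/
inductive OmegaTerm (A : Type*) : Type _ where
  | one : OmegaTerm A
  | letter : A → OmegaTerm A
  | mul : OmegaTerm A → OmegaTerm A → OmegaTerm A
  | omega : OmegaTerm A → OmegaTerm A

namespace OmegaTerm

variable {A : Type*}

/-- The ω-term `s^k` for `k ≥ 1` (`s^{k+1} = s^k · s`); `pow s 0` is the term `1`
but is never used with exponent `0` below. -/
def pow (s : OmegaTerm A) : ℕ → OmegaTerm A
  | 0 => OmegaTerm.one
  | 1 => s
  | k + 2 => (pow s (k + 1)).mul s

/-- The ω-term `s^k · t`, where `k ∈ ℕ ∪ {ω}` (`none` denotes the exponent ω), with the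
conventions `s^0 · t = t` and `s^ω · t = (s^ω) · t`. -/
def powMul (s : OmegaTerm A) : Option ℕ → OmegaTerm A → OmegaTerm A
  | none, t => (OmegaTerm.omega s).mul t
  | some 0, t => t
  | some (k + 1), t => (pow s (k + 1)).mul t

/-- The ω-term `t · s^k`, where `k ∈ ℕ ∪ {ω}`, with `t · s^0 = t`. -/
def mulPow (t s : OmegaTerm A) : Option ℕ → OmegaTerm A
  | none => t.mul (OmegaTerm.omega s)
  | some 0 => t
  | some (k + 1) => t.mul (pow s (k + 1))

/-- Decompositions of ω-terms: if `t` is `1` or a letter, its decompositions are `(1,t)`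
and `(t,1)`; if `t = t₁ · t₂`, they are `(s₁, s₂ · t₂)` for `(s₁,s₂)` a decomposition of
`t₁` and `(t₁ · s₁, s₂)` for `(s₁,s₂)` a decomposition of `t₂`; if `t = s^ω`, they are
`(s^k · s₁, s₂ · s^ℓ)` with `(s₁,s₂)` a decomposition of `s` and `k, ℓ ∈ ℕ ∪ {ω}`, at
least one of them equal to ω. -/
inductive Decomp : OmegaTerm A → OmegaTerm A → OmegaTerm A → Prop where
  | base_left (t : OmegaTerm A) (h : t = OmegaTerm.one ∨ ∃ a, t = OmegaTerm.letter a) :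
      Decomp t OmegaTerm.one t
  | base_right (t : OmegaTerm A) (h : t = OmegaTerm.one ∨ ∃ a, t = OmegaTerm.letter a) :
      Decomp t t OmegaTerm.one
  | mul_left {t₁ t₂ s₁ s₂ : OmegaTerm A} :
      Decomp t₁ s₁ s₂ → Decomp (t₁.mul t₂) s₁ (s₂.mul t₂)
  | mul_right {t₁ t₂ s₁ s₂ : OmegaTerm A} :
      Decomp t₂ s₁ s₂ → Decomp (t₁.mul t₂) (t₁.mul s₁) s₂
  | omega_case {s s₁ s₂ : OmegaTerm A} (k ℓ : Option ℕ) (h : k = none ∨ ℓ = none) :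
      Decomp s s₁ s₂ →
      Decomp (OmegaTerm.omega s) (powMul s k s₁) (mulPow s₂ s ℓ)

/-- Interpretation of ω-terms in a monoid `M` equipped with a unary ω-power operation
`w : M → M`, the letters being interpreted via `f : A → M`. -/
def eval {M : Type*} [Monoid M] (f : A → M) (w : M → M) : OmegaTerm A → M
  | OmegaTerm.one => 1
  | OmegaTerm.letter a => f a
  | OmegaTerm.mul t₁ t₂ => eval f w t₁ * eval f w t₂
  | OmegaTerm.omega t => w (eval f w t)

end OmegaTerm

namespace OmegaTerm

/-- The measure `μ(t) = (μ_ω(t), μ_ℓ(t)) ∈ ℕ ×ₗ ℕ` (lexicographically ordered) of an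
ω-term: `μ(1) = μ(a) = (0,0)`, `μ(s^ω) = (μ_ω(s)+1, 0)`,
`μ(t₁ · s^ω) = max {μ(t₁), μ(s^ω)}`, and `μ(t₁ · t₂) = max {μ(t₁), μ(t₂) + (0,1)}`
when `t₂` is not an ω-power. -/
def mu {A : Type*} : OmegaTerm A → ℕ ×ₗ ℕ
  | OmegaTerm.one => toLex (0, 0)
  | OmegaTerm.letter _ => toLex (0, 0)
  | OmegaTerm.omega s => toLex ((ofLex (mu s)).1 + 1, 0)
  | OmegaTerm.mul t₁ (OmegaTerm.omega s) => max (mu t₁) (toLex ((ofLex (mu s)).1 + 1, 0))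
  | OmegaTerm.mul t₁ t₂ => max (mu t₁) (toLex ((ofLex (mu t₂)).1, (ofLex (mu t₂)).2 + 1))

end OmegaTerm

namespace OmegaTerm

variable {A : Type*}

private lemma fst_le_of_le {x y : ℕ ×ₗ ℕ} (h : x ≤ y) : (ofLex x).1 ≤ (ofLex y).1 := by
  rcases Prod.Lex.le_iff.1 h with h1 | ⟨h1, _⟩
  · exact h1.le
  · exact h1.le

private lemma lt_succ_of_fst_le {x : ℕ ×ₗ ℕ} {n : ℕ} (h : (ofLex x).1 ≤ n) :
    x < toLex (n + 1, 0) :=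
  Prod.Lex.lt_iff.2 (Or.inl (Nat.lt_succ_of_le h))

private lemma bot_le' (x : ℕ ×ₗ ℕ) : toLex (0, 0) ≤ x := by
  rcases Nat.eq_zero_or_pos (ofLex x).1 with h | h
  · exact Prod.Lex.le_iff.2 (Or.inr ⟨h.symm, Nat.zero_le _⟩)
  · exact Prod.Lex.le_iff.2 (Or.inl h)

private lemma bump_lt (x : ℕ ×ₗ ℕ) : x < toLex ((ofLex x).1, (ofLex x).2 + 1) :=
  Prod.Lex.lt_iff.2
    (Or.inr ⟨rfl, Nat.lt_succ_self _⟩)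

private lemma ofLex_max_fst (x y : ℕ ×ₗ ℕ) :
    (ofLex (max x y)).1 = max (ofLex x).1 (ofLex y).1 := by
  rcases le_total x y with h | h
  · rw [max_eq_right h, max_eq_right (fst_le_of_le h)]
  · rw [max_eq_left h, max_eq_left (fst_le_of_le h)]

private lemma mu_fst_mul (a b : OmegaTerm A) :
    (ofLex (mu (a.mul b))).1 = max (ofLex (mu a)).1 (ofLex (mu b)).1 := by
  cases b <;> simp only [mu, ofLex_max_fst, ofLex_toLex]

private lemma mu_lt_omega (s : OmegaTerm A) : mu s < mu (OmegaTerm.omega s) := by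
  simp only [mu]; exact lt_succ_of_fst_le le_rfl

private lemma mu_le_mul_right (a b : OmegaTerm A) : mu b ≤ mu (a.mul b) := by
  cases b with
  | one => exact bot_le' _
  | letter c => exact bot_le' _
  | omega s => simp only [mu]; exact le_max_right _ _
  | mul c d =>
      simp only [mu]
      exact le_trans ((bump_lt (mu (c.mul d))).le) (le_max_right _ _)

private lemma mu_pow_fst (s : OmegaTerm A) :
    ∀ n, (ofLex (mu (pow s n))).1 ≤ (ofLex (mu s)).1
  | 0 => Nat.zero_le _
  | 1 => le_rfl
  | (n + 2) => by
      rw [show pow s (n + 2) = (pow s (n + 1)).mul s from rfl, mu_fst_mul]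
      exact max_le (mu_pow_fst s (n + 1)) le_rfl

private lemma mu_decomp_le {t u v : OmegaTerm A} (h : Decomp t u v) : mu v ≤ mu t := by
  induction h with
  | base_left t _ => exact le_rfl
  | base_right t _ => exact bot_le' _
  | @mul_left t₁ t₂ s₁ s₂ _ ih =>
      cases t₂ <;> (simp only [mu]; exact max_le_max ih le_rfl)
  | @mul_right t₁ t₂ s₁ s₂ _ ih => exact le_trans ih (mu_le_mul_right _ _)
  | @omega_case s s₁ s₂ k ℓ hkl _ ih =>
      cases ℓ with
      | none =>
          simp only [mulPow, mu]
          exact max_le (le_trans ih (mu_lt_omega s).le) le_rfl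
      | some m =>
          cases m with
          | zero => exact le_trans ih (mu_lt_omega s).le
          | succ m =>
              show mu (s₂.mul (pow s (m + 1))) ≤ mu (OmegaTerm.omega s)
              simp only [mu]
              refine (lt_succ_of_fst_le ?_).le
              rw [mu_fst_mul]
              exact max_le (fst_le_of_le ih) (mu_pow_fst s (m + 1))

private lemma mulPow_some_lt {s v : OmegaTerm A} (h : mu v ≤ mu s) (m : ℕ) :
    mu (mulPow v s (some m)) < mu (OmegaTerm.omega s) := by
  cases m with
  | zero => exact lt_of_le_of_lt h (mu_lt_omega s)
  | succ m =>
      show mu (v.mul (pow s (m + 1))) < mu (OmegaTerm.omega s)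
      simp only [mu]
      refine lt_succ_of_fst_le ?_
      rw [mu_fst_mul]
      exact max_le (fst_le_of_le h) (mu_pow_fst s (m + 1))

private lemma mu_lt_mul_of_not_omega (t₁ : OmegaTerm A) {t₂ v : OmegaTerm A}
    (h : mu v ≤ mu t₂) (hno : ∀ s, t₂ ≠ OmegaTerm.omega s) : mu v < mu (t₁.mul t₂) := by
  cases t₂ with
  | omega s => exact absurd rfl (hno s)
  | one =>
      refine lt_of_le_of_lt h ?_
      simp only [mu]
      exact lt_of_lt_of_le (bump_lt _) (le_max_right _ _)
  | letter a =>
      refine lt_of_le_of_lt h ?_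
      simp only [mu]
      exact lt_of_lt_of_le (bump_lt _) (le_max_right _ _)
  | mul a b =>
      refine lt_of_le_of_lt h ?_
      simp only [mu]
      exact lt_of_lt_of_le (bump_lt _) (le_max_right _ _)

end OmegaTerm

/-- If `(t̄, t′)` is a decomposition of the ω-term `t` and `μ(t′) = μ(t)`, then one of
the following four cases occurs:
(1) `t` is `1` or a letter;
(2) `t = s₁ · s₂` and `(t̄, t′) = (s̄, s′ · s₂)` for some decomposition `(s̄, s′)` of `s₁`;
(3) `t = s^ω` and `(t̄, t′) = (s^k · s̄, s′ · s^ω)` for some decomposition `(s̄, s′)` of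
`s` and some `k ∈ ℕ ∪ {ω}`;
(4) `t = s₁ · s^ω` and `(t̄, t′) = (s₁ · (s^k · s̄), s′ · s^ω)` for some decomposition
`(s̄, s′)` of `s` and some `k ∈ ℕ ∪ {ω}`. -/
theorem mu_eq_cases {A : Type*} {t tb t' : OmegaTerm A}
    (hd : OmegaTerm.Decomp t tb t')
    (heq : OmegaTerm.mu t' = OmegaTerm.mu t) :
    (t = OmegaTerm.one ∨ ∃ a, t = OmegaTerm.letter a) ∨
    (∃ s₁ s₂ sb s' : OmegaTerm A, t = s₁.mul s₂ ∧ OmegaTerm.Decomp s₁ sb s' ∧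
      tb = sb ∧ t' = s'.mul s₂) ∨
    (∃ (s sb s' : OmegaTerm A) (k : Option ℕ), t = OmegaTerm.omega s ∧
      OmegaTerm.Decomp s sb s' ∧ tb = OmegaTerm.powMul s k sb ∧
      t' = s'.mul (OmegaTerm.omega s)) ∨
    (∃ (s₁ s sb s' : OmegaTerm A) (k : Option ℕ), t = s₁.mul (OmegaTerm.omega s) ∧
      OmegaTerm.Decomp s sb s' ∧ tb = s₁.mul (OmegaTerm.powMul s k sb) ∧
      t' = s'.mul (OmegaTerm.omega s)) := by
  open OmegaTerm in
  cases hd with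
  | base_left t h => exact Or.inl h
  | base_right t h => exact Or.inl h
  | mul_left h =>
      rename_i t₁ t₂ s₂
      exact Or.inr (Or.inl ⟨t₁, t₂, tb, s₂, rfl, h, rfl, rfl⟩)
  | mul_right h =>
      rename_i t₁ t₂ s₁
      cases t₂ with
      | one =>
          exact absurd heq (ne_of_lt (mu_lt_mul_of_not_omega t₁ (mu_decomp_le h)
            (fun s hs => by cases hs)))
      | letter a =>
          exact absurd heq (ne_of_lt (mu_lt_mul_of_not_omega t₁ (mu_decomp_le h)
            (fun s hs => by cases hs)))
      | mul a b =>
          exact absurd heq (ne_of_lt (mu_lt_mul_of_not_omega t₁ (mu_decomp_le h)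
            (fun s hs => by cases hs)))
      | omega s =>
          cases h with
          | base_left _ hb => rcases hb with h1 | ⟨a, h1⟩ <;> cases h1
          | base_right _ hb => rcases hb with h1 | ⟨a, h1⟩ <;> cases h1
          | omega_case k ℓ hkl hdec =>
              rename_i u v
              cases ℓ with
              | none =>
                  exact Or.inr (Or.inr (Or.inr ⟨t₁, s, u, v, k, rfl, hdec, rfl, rfl⟩))
              | some m =>
                  exact absurd heq (ne_of_lt (lt_of_lt_of_le
                    (mulPow_some_lt (mu_decomp_le hdec) m)
                    (mu_le_mul_right t₁ (OmegaTerm.omega s))))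
  | omega_case k ℓ hkl h =>
      rename_i s u v
      cases ℓ with
      | none => exact Or.inr (Or.inr (Or.inl ⟨s, u, v, k, rfl, h, rfl, rfl⟩))
      | some m => exact absurd heq (ne_of_lt (mulPow_some_lt (mu_decomp_le h) m))
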